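/- Let k, m be natural numbers with k ≤ m, let A be any real k × m matrix (A : Matrix (Fin k) (Fin m) ℝ), and let λ : Fin m → ℝ satisfy λ l ≥ 0 for all l. For t ∈ ℝ define G(t) := A * Matrix.diagonal (fun l => Real.exp (−2 * Real.sqrt (λ l) * t)) * Aᵀ. Then the function t ↦ det (G t) is nonincreasing on ℝ: for all s ≤ t, det (G t) ≤ det (G s). -/

import Mathlib

open Matrix

lemma psd_det_nonneg {n : ℕ} {P : Matrix (Fin n) (Fin n) ℝ} (hP : P.PosSemidef) :
    0 ≤ P.det := by
  rw [hP.1.det_eq_prod_eigenvalues]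
  exact Finset.prod_nonneg fun i _ => by simpa using hP.eigenvalues_nonneg i

lemma det_one_add_psd {n : ℕ} {R : Matrix (Fin n) (Fin n) ℝ} (hR : R.PosSemidef) :
    1 ≤ (1 + R).det := by
  have hH := hR.1
  have hspec := hH.spectral_theorem
  set U : Matrix (Fin n) (Fin n) ℝ := (hH.eigenvectorUnitary : Matrix (Fin n) (Fin n) ℝ)
  have hU : U * star U = 1 := (Matrix.mem_unitaryGroup_iff).mp hH.eigenvectorUnitary.2
  have h1 : (1 : Matrix (Fin n) (Fin n) ℝ) + R
      = U * (1 + diagonal (RCLike.ofReal ∘ hH.eigenvalues)) * star U := by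
    rw [mul_add, mul_one, add_mul, hU]
    exact congrArg (1 + ·) hspec
  rw [h1, det_mul_right_comm, hU, one_mul]
  have : (1 : Matrix (Fin n) (Fin n) ℝ) + diagonal (RCLike.ofReal ∘ hH.eigenvalues)
      = diagonal (fun i => 1 + hH.eigenvalues i) := by
    rw [← diagonal_one, diagonal_add]
    rfl
  rw [this, det_diagonal]
  have h := Finset.prod_le_prod (s := Finset.univ) (f := fun _ : Fin n => (1:ℝ))
    (g := fun i => 1 + hH.eigenvalues i) (fun i _ => zero_le_one)
    (fun i _ => by have h0 : 0 ≤ hH.eigenvalues i := hR.eigenvalues_nonneg i; linarith)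
  simpa using h

open scoped MatrixOrder in
lemma det_le_det_add_psd {n : ℕ} {P Q : Matrix (Fin n) (Fin n) ℝ}
    (hP : P.PosSemidef) (hQ : Q.PosSemidef) : P.det ≤ (P + Q).det := by
  by_cases hd : P.det = 0
  · rw [hd]; exact psd_det_nonneg (hP.add hQ)
  · set S := CFC.sqrt P with hSdef
    have hS : S.PosSemidef := (CFC.sqrt_nonneg P).posSemidef
    have hSS : S * S = P := CFC.sqrt_mul_sqrt_self P hP.nonneg
    have hdetS : S.det * S.det = P.det := by rw [← det_mul, hSS]
    have hSdet : S.det ≠ 0 := fun h => hd (by rw [← hdetS, h, mul_zero])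
    have hSinv : S * S⁻¹ = 1 := mul_nonsing_inv S (isUnit_iff_ne_zero.mpr hSdet)
    have hSinv' : S⁻¹ * S = 1 := nonsing_inv_mul S (isUnit_iff_ne_zero.mpr hSdet)
    have hRpsd : (S⁻¹ * Q * S⁻¹).PosSemidef := by
      have := hQ.mul_mul_conjTranspose_same S⁻¹
      rwa [conjTranspose_nonsing_inv, hS.1.eq] at this
    have key : P + Q = S * (1 + S⁻¹ * Q * S⁻¹) * S := by
      rw [mul_add, mul_one, add_mul, hSS, ← mul_assoc, ← mul_assoc, hSinv, one_mul,
        mul_assoc, hSinv', mul_one]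
    rw [key, det_mul, det_mul]
    calc P.det = S.det * 1 * S.det := by rw [mul_one, mul_comm, hdetS]
    _ ≤ S.det * (1 + S⁻¹ * Q * S⁻¹).det * S.det := by
        have h2 : 0 ≤ S.det := psd_det_nonneg hS
        have := det_one_add_psd hRpsd
        nlinarith

lemma psd_congr {n m : ℕ} (A : Matrix (Fin n) (Fin m) ℝ) {d : Fin m → ℝ}
    (hd : ∀ l, 0 ≤ d l) : (A * Matrix.diagonal d * Aᵀ).PosSemidef := by
  have hD : (Matrix.diagonal d).PosSemidef := posSemidef_diagonal_iff.mpr hd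
  have := hD.mul_mul_conjTranspose_same A
  rwa [conjTranspose_eq_transpose_of_trivial] at this


/-- Monotonicity of the squared Jacobi-field density (STEP 5 of the proof of
Theorem 1(ii) of the paper): for any real `k × m` matrix `A` and nonnegative
`λ l`, the function `t ↦ det (A · diag(exp(−2√(λ_l) t)) · Aᵀ)` is
nonincreasing on `ℝ`. -/
theorem det_gram_antitone (k m : ℕ) (hkm : k ≤ m)
    (A : Matrix (Fin k) (Fin m) ℝ)
    (lam : Fin m → ℝ) (hlam : ∀ l, 0 ≤ lam l) :
    ∀ s t : ℝ, s ≤ t →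
      (A * Matrix.diagonal (fun l => Real.exp (-2 * Real.sqrt (lam l) * t)) * Aᵀ).det ≤
      (A * Matrix.diagonal (fun l => Real.exp (-2 * Real.sqrt (lam l) * s)) * Aᵀ).det := by
  intro s t hst
  set P := A * Matrix.diagonal (fun l => Real.exp (-2 * Real.sqrt (lam l) * t)) * Aᵀ
  set Q := A * Matrix.diagonal
    (fun l => Real.exp (-2 * Real.sqrt (lam l) * s) - Real.exp (-2 * Real.sqrt (lam l) * t)) * Aᵀ
  have hle : ∀ l, Real.exp (-2 * Real.sqrt (lam l) * t) ≤ Real.exp (-2 * Real.sqrt (lam l) * s) := by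
    intro l
    apply Real.exp_le_exp.mpr
    have h0 : -2 * Real.sqrt (lam l) ≤ 0 := by
      have := Real.sqrt_nonneg (lam l); linarith
    exact mul_le_mul_of_nonpos_left hst h0
  have hP : P.PosSemidef := psd_congr A fun l => (Real.exp_pos _).le
  have hQ : Q.PosSemidef := psd_congr A fun l => sub_nonneg.mpr (hle l)
  have hsum : P + Q =
      A * Matrix.diagonal (fun l => Real.exp (-2 * Real.sqrt (lam l) * s)) * Aᵀ := by
    show _ * _ * _ + _ * _ * _ = _
    rw [← Matrix.add_mul, ← Matrix.mul_add, Matrix.diagonal_add]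
    have hd : (fun l => Real.exp (-2 * Real.sqrt (lam l) * t) +
        (Real.exp (-2 * Real.sqrt (lam l) * s) - Real.exp (-2 * Real.sqrt (lam l) * t)))
        = fun l => Real.exp (-2 * Real.sqrt (lam l) * s) := by funext l; ring
    rw [hd]
  calc P.det ≤ (P + Q).det := det_le_det_add_psd hP hQ
  _ = _ := by rw [hsum]
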